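/- Let a + b < n and a < n/2 < b, and let ℱ be a maximal independent set of flags of type {a,b} of [n] (pairwise non-opposite, and maximal under inclusion). A b-subset B of [n] is contained in exactly C(b,a) flags of ℱ if and only if every flag (A',B') ∈ ℱ satisfies A' ∩ B ≠ ∅ or B ∪ B' ≠ [n]. -/

import Mathlib

open Finset

/-- The ground set `[n] = {1,…,n}`. -/
def Iv (n : ℕ) : Finset ℕ := Finset.Icc 1 n

/-- A flag of type `{a,b}` of `[n]`: a pair `(A,B)` with `A ⊆ B ⊆ [n]`, `|A| = a`, `|B| = b`. -/
def IsFlag (n a b : ℕ) (f : Finset ℕ × Finset ℕ) : Prop :=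
  f.1 ⊆ f.2 ∧ f.2 ⊆ Iv n ∧ f.1.card = a ∧ f.2.card = b

/-- Opposition of flags `(A₁,B₁)`, `(A₂,B₂)`: `B₁ ∪ B₂ = [n]`, `A₁ ∩ B₂ = ∅`, `A₂ ∩ B₁ = ∅`. -/
def OppFlag (n : ℕ) (f g : Finset ℕ × Finset ℕ) : Prop :=
  f.2 ∪ g.2 = Iv n ∧ f.1 ∩ g.2 = ∅ ∧ g.1 ∩ f.2 = ∅

/-- An independent (EKR) set of flags: pairwise non-opposite. -/
def Indep (n : ℕ) (F : Finset (Finset ℕ × Finset ℕ)) : Prop :=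
  ∀ f ∈ F, ∀ g ∈ F, ¬ OppFlag n f g

/-- The `ℱ`-weight of a `b`-set `B`: the number of flags in `ℱ` with second component `B`. -/
def weightB (F : Finset (Finset ℕ × Finset ℕ)) (B : Finset ℕ) : ℕ :=
  (F.filter (fun f => f.2 = B)).card

/-- The `ℱ`-weight of an `a`-set `A`: the number of flags in `ℱ` with first component `A`. -/
def weightA (F : Finset (Finset ℕ × Finset ℕ)) (A : Finset ℕ) : ℕ :=
  (F.filter (fun f => f.1 = A)).card

/-- A maximal independent set of flags of type `{a,b}`. -/
def MaximalIndep (n a b : ℕ) (F : Finset (Finset ℕ × Finset ℕ)) : Prop :=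
  (∀ f ∈ F, IsFlag n a b f) ∧ Indep n F ∧
    (∀ f, IsFlag n a b f → Indep n (insert f F) → f ∈ F)

/-- in a maximal independent set `ℱ` of flags of type `{a,b}`,
a `b`-set `B` has weight `C(b,a)` iff every flag `(A',B') ∈ ℱ` satisfies
`A' ∩ B ≠ ∅` or `B ∪ B' ≠ [n]`. -/
theorem stmt_1 (n a b : ℕ) (hab : a + b < n) (ha : 2 * a < n) (hb : n < 2 * b)
    (F : Finset (Finset ℕ × Finset ℕ)) (hF : MaximalIndep n a b F)
    (B : Finset ℕ) (hB : B ⊆ Iv n) (hBcard : B.card = b) :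
    weightB F B = Nat.choose b a ↔
      ∀ f ∈ F, f.1 ∩ B ≠ ∅ ∨ B ∪ f.2 ≠ Iv n := by
  obtain ⟨hflag, hind, hmax⟩ := hF
  have hIvcard : (Iv n).card = n := by simp [Iv]
  have hbn : b < n := by omega
  constructor
  · intro hw f hf
    by_contra hcon
    push_neg at hcon
    obtain ⟨h1, h2⟩ := hcon
    set S := F.filter (fun f => f.2 = B) with hS
    have himg : S.image Prod.fst ⊆ B.powersetCard a := by
      intro A hA
      simp only [mem_image] at hA
      obtain ⟨g, hg, rfl⟩ := hA
      rw [hS, mem_filter] at hg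
      obtain ⟨hgF, hgB⟩ := hg
      obtain ⟨hsub, -, hca, -⟩ := hflag g hgF
      rw [mem_powersetCard]
      exact ⟨hgB ▸ hsub, hca⟩
    have hinj : Set.InjOn Prod.fst (S : Set (Finset ℕ × Finset ℕ)) := by
      intro x hx y hy hxy
      simp only [hS, coe_filter, Set.mem_setOf_eq] at hx hy
      exact Prod.ext hxy (hx.2.trans hy.2.symm)
    have hcardimg : (S.image Prod.fst).card = S.card := card_image_of_injOn hinj
    have heq : S.image Prod.fst = B.powersetCard a := by
      apply eq_of_subset_of_card_le himg
      rw [card_powersetCard, hBcard, hcardimg]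
      exact le_of_eq hw.symm
    have hfb : f.2.card = b := (hflag f hf).2.2.2
    have hdiff : a ≤ (B \ f.2).card := by
      have hcu : (B ∪ f.2).card = n := by rw [h2, hIvcard]
      have := card_sdiff_add_card B f.2
      omega
    obtain ⟨A, hAsub, hAcard⟩ := Finset.exists_subset_card_eq (s := B \ f.2) hdiff
    have hApow : A ∈ B.powersetCard a :=
      mem_powersetCard.2 ⟨hAsub.trans sdiff_subset, hAcard⟩
    rw [← heq, mem_image] at hApow
    obtain ⟨g, hg, hgA⟩ := hApow
    rw [hS, mem_filter] at hg
    obtain ⟨hgF, hgB⟩ := hg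
    refine hind g hgF f hf ⟨?_, ?_, ?_⟩
    · rw [hgB]; exact h2
    · rw [hgA]
      rw [← disjoint_iff_inter_eq_empty]
      exact (disjoint_sdiff_self_left.mono_left hAsub)
    · rw [hgB]; exact h1
  · intro h
    have key : ∀ A ∈ B.powersetCard a, (A, B) ∈ F := by
      intro A hA
      rw [mem_powersetCard] at hA
      obtain ⟨hAB, hAc⟩ := hA
      apply hmax (A, B) ⟨hAB, hB, hAc, hBcard⟩
      intro f' hf' g' hg'
      rw [mem_insert] at hf' hg'
      rintro ⟨o1, o2, o3⟩
      rcases hf' with rfl | hf' <;> rcases hg' with rfl | hg'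
      · simp only [union_self] at o1
        rw [o1, hIvcard] at hBcard; omega
      · rcases h g' hg' with hc | hc
        · exact hc o3
        · exact hc o1
      · rcases h f' hf' with hc | hc
        · exact hc o2
        · exact hc (by rw [union_comm]; exact o1)
      · exact hind f' hf' g' hg' ⟨o1, o2, o3⟩
    have hfilt : F.filter (fun f => f.2 = B) = (B.powersetCard a).image (fun A => (A, B)) := by
      ext f
      simp only [mem_filter, mem_image, mem_powersetCard]
      constructor
      · rintro ⟨hfF, hfB⟩
        obtain ⟨hsub, -, hca, -⟩ := hflag f hfF
        exact ⟨f.1, ⟨hfB ▸ hsub, hca⟩, by rw [← hfB]⟩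
      · rintro ⟨A, hA, rfl⟩
        exact ⟨key A (mem_powersetCard.2 hA), rfl⟩
    rw [weightB, hfilt, card_image_of_injective _ (fun x y hxy => (Prod.mk.injEq _ _ _ _ ▸ hxy).1),
      card_powersetCard, hBcard]
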